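/- Define the operator Γ: R^S → R^S by (Γv)(s) = min{ min_{s'≠s} (v(s') + Δ_{(s,s')} + ω_{(s,s')}), v(s) }, where Δ_{(s,s')} = 0 and ω_{(s,s')} = 2·sp(h*) for pairs not in the constraint set E. Then: (i) Γv ≤ v; (ii) Γ is monotone (v1 ≤ v2 implies Γv1 ≤ Γv2); (iii) Γv = v if and only if v ∈ C; and (iv) Γ^S v = Proj_C(v), i.e., iterating Γ exactly S = |S| times reaches the projection. -/

import Mathlib

open Finset

lemma erase_univ_nonempty {S : Type*} [Fintype S] [Nontrivial S] [DecidableEq S] (s : S) :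
    (Finset.univ.erase s).Nonempty := by
  obtain ⟨y, hy⟩ := exists_ne s
  exact ⟨y, Finset.mem_erase.mpr ⟨hy, Finset.mem_univ y⟩⟩

/-- The relaxation operator `(Γv)(s) = min{ min_{s'≠s} (v(s') + b(s,s')), v(s) }`,
where `b(s,s') = Δ_{(s,s')} + ω_{(s,s')}` is the (extended) difference bound. -/
noncomputable def relaxOp {S : Type*} [Fintype S] [Nontrivial S] [DecidableEq S]
    (b : S → S → ℝ) (v : S → ℝ) : S → ℝ :=
  fun s => min ((Finset.univ.erase s).inf' (erase_univ_nonempty s)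
    (fun s' => v s' + b s s')) (v s)

section Aux

variable {S : Type*} [Fintype S] [Nontrivial S] [DecidableEq S] (b : S → S → ℝ)

lemma relax_le (v : S → ℝ) : relaxOp b v ≤ v := fun _ => min_le_right _ _

lemma relax_le_pair (v : S → ℝ) {s t : S} (h : t ≠ s) :
    relaxOp b v s ≤ v t + b s t :=
  le_trans (min_le_left _ _)
    (Finset.inf'_le _ (Finset.mem_erase.mpr ⟨h, Finset.mem_univ t⟩))

lemma relax_mono {v₁ v₂ : S → ℝ} (h : v₁ ≤ v₂) : relaxOp b v₁ ≤ relaxOp b v₂ := by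
  intro s
  refine min_le_min ?_ (h s)
  exact Finset.le_inf' _ _ fun t ht =>
    le_trans (Finset.inf'_le _ ht) (add_le_add_left (h t) _)

lemma relax_eq_self_iff (v : S → ℝ) :
    relaxOp b v = v ↔ ∀ s s', s ≠ s' → v s - v s' ≤ b s s' := by
  constructor
  · intro h s s' hss'
    have h1 : relaxOp b v s ≤ v s' + b s s' := relax_le_pair b v hss'.symm
    rw [h] at h1
    linarith
  · intro h
    funext s
    refine le_antisymm (min_le_right _ _) (le_min ?_ le_rfl)
    refine Finset.le_inf' _ _ fun t ht => ?_
    have hts : t ≠ s := (Finset.mem_erase.mp ht).1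
    have := h s t hts.symm
    linarith

end Aux

/-- Properties of the relaxation operator `Γ` used to compute the projection onto
`C = {v : v(s) - v(s') ≤ b(s,s') ∀ s ≠ s'}`:
(i) `Γv ≤ v`; (ii) `Γ` is monotone; (iii) `Γv = v ↔ v ∈ C`;
(iv) `Γ^{|S|} v` is the projection of `v` onto `C`, i.e. the greatest element of
`{u ∈ C : u ≤ v}`. -/
theorem stmt9 {S : Type*} [Fintype S] [DecidableEq S] [Nontrivial S]
    (b : S → S → ℝ)
    (C : Set (S → ℝ)) (hCdef : C = {v | ∀ s s', s ≠ s' → v s - v s' ≤ b s s'})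
    (hne : C.Nonempty) :
    (∀ v : S → ℝ, relaxOp b v ≤ v) ∧
    (∀ v₁ v₂ : S → ℝ, v₁ ≤ v₂ → relaxOp b v₁ ≤ relaxOp b v₂) ∧
    (∀ v : S → ℝ, relaxOp b v = v ↔ v ∈ C) ∧
    (∀ v : S → ℝ, (relaxOp b)^[Fintype.card S] v ∈ C ∧
      (relaxOp b)^[Fintype.card S] v ≤ v ∧
      ∀ u ∈ C, u ≤ v → u ≤ (relaxOp b)^[Fintype.card S] v) := by
  classical
  subst hCdef
  refine ⟨relax_le b, fun v₁ v₂ h => relax_mono b h,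
    fun v => (relax_eq_self_iff b v).trans (by simp [Set.mem_setOf_eq]), ?_⟩
  intro v
  obtain ⟨u₀, hu₀⟩ := hne
  simp only [Set.mem_setOf_eq] at hu₀
  -- the set of feasible lower bounds of v
  set Q : Set (S → ℝ) := {u | (∀ s s', s ≠ s' → u s - u s' ≤ b s s') ∧ u ≤ v} with hQdef
  have hQne : Q.Nonempty := by
    refine ⟨fun s => u₀ s - Finset.univ.sup' Finset.univ_nonempty (fun s => u₀ s - v s), ?_, ?_⟩
    · intro s s' h
      have := hu₀ s s' h
      simpa using this
    · intro s
      have := Finset.le_sup' (fun s => u₀ s - v s) (Finset.mem_univ s)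
      simp only at this ⊢
      linarith
  -- the projection P
  set P : S → ℝ := fun s => sSup ((fun u => u s) '' Q) with hPdef
  have hBdd : ∀ s, BddAbove ((fun u => u s) '' Q) := by
    intro s
    refine ⟨v s, ?_⟩
    rintro x ⟨u, hu, rfl⟩
    exact hu.2 s
  have himne : ∀ s, ((fun u => u s) '' Q).Nonempty := fun s => hQne.image _
  have hPle : P ≤ v := by
    intro s
    refine csSup_le (himne s) ?_
    rintro x ⟨u, hu, rfl⟩
    exact hu.2 s
  have hleP : ∀ u ∈ Q, u ≤ P := fun u hu s => le_csSup (hBdd s) ⟨u, hu, rfl⟩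
  have hPC : ∀ s s', s ≠ s' → P s - P s' ≤ b s s' := by
    intro s s' h
    have h1 : P s ≤ P s' + b s s' := by
      refine csSup_le (himne s) ?_
      rintro x ⟨u, hu, rfl⟩
      have h1 := hu.1 s s' h
      have h2 := hleP u hu s'
      linarith
    linarith
  have hPfix : relaxOp b P = P := (relax_eq_self_iff b P).mpr hPC
  have hPiter : ∀ k, P ≤ (relaxOp b)^[k] v := by
    intro k
    induction k with
    | zero => simpa using hPle
    | succ k ih =>
      rw [Function.iterate_succ_apply']
      calc P = relaxOp b P := hPfix.symm
        _ ≤ relaxOp b ((relaxOp b)^[k] v) := relax_mono b ih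
  have hiter_le : ∀ k, (relaxOp b)^[k] v ≤ v := by
    intro k
    induction k with
    | zero => simp
    | succ k ih =>
      rw [Function.iterate_succ_apply']
      exact le_trans (relax_le b _) ih
  -- the set of coordinates already agreeing with P
  set A : ℕ → Finset S := fun k => Finset.univ.filter (fun s => (relaxOp b)^[k] v s = P s)
    with hAdef
  have hAmono : ∀ k, A k ⊆ A (k + 1) := by
    intro k s hs
    simp only [hAdef, Finset.mem_filter, Finset.mem_univ, true_and] at hs ⊢
    have h1 : (relaxOp b)^[k + 1] v s ≤ (relaxOp b)^[k] v s := by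
      rw [Function.iterate_succ_apply']
      exact relax_le b _ s
    have h2 := hPiter (k + 1) s
    rw [hs] at h1
    linarith
  have hK : ∀ k, ∀ s, P s = v s → s ∈ A k := by
    intro k s hs
    have h1 := hPiter k s
    have h2 := hiter_le k s
    simp only [hAdef, Finset.mem_filter, Finset.mem_univ, true_and]
    linarith
  -- bump lemma: cannot have a bumpable set
  have bump : ∀ T : Finset S, T.Nonempty → (∀ s ∈ T, P s < v s) →
      (∀ s ∈ T, ∀ t, t ∉ T → P s < P t + b s t) → False := by
    intro T hT h1 h2
    set f : S × S → ℝ := fun p =>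
      if p.2 ∈ T then v p.1 - P p.1 else P p.2 + b p.1 p.2 - P p.1 with hfdef
    have hprodne : (T ×ˢ (Finset.univ : Finset S)).Nonempty :=
      hT.product Finset.univ_nonempty
    set ε := (T ×ˢ (Finset.univ : Finset S)).inf' hprodne f with hε
    have hεpos : 0 < ε := by
      rw [hε, Finset.lt_inf'_iff]
      rintro ⟨s, t⟩ hp
      rw [Finset.mem_product] at hp
      by_cases ht : t ∈ T
      · simp only [hfdef, ht, if_true]
        have := h1 s hp.1
        linarith
      · simp only [hfdef, ht, if_false]
        have := h2 s hp.1 t ht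
        linarith
    have hεle1 : ∀ s ∈ T, ε ≤ v s - P s := by
      intro s hs
      have := Finset.inf'_le f (show (s, s) ∈ T ×ˢ (Finset.univ : Finset S) from Finset.mem_product.mpr ⟨hs, Finset.mem_univ s⟩)
      have h' : ε ≤ f (s, s) := this
      simp only [hfdef, hs, if_true] at h'
      exact h'
    have hεle2 : ∀ s ∈ T, ∀ t, t ∉ T → ε ≤ P t + b s t - P s := by
      intro s hs t ht
      have := Finset.inf'_le f (show (s, t) ∈ T ×ˢ (Finset.univ : Finset S) from Finset.mem_product.mpr ⟨hs, Finset.mem_univ t⟩)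
      have h' : ε ≤ f (s, t) := this
      simp only [hfdef, ht, if_false] at h'
      exact h'
    set u' : S → ℝ := fun s => if s ∈ T then P s + ε else P s with hu'def
    have hu'Q : u' ∈ Q := by
      constructor
      · intro s t hst
        simp only [hu'def]
        by_cases hs : s ∈ T <;> by_cases ht : t ∈ T <;>
          simp only [hs, ht, if_true, if_false]
        · have := hPC s t hst; linarith
        · have := hεle2 s hs t ht; linarith
        · have := hPC s t hst; linarith
        · exact hPC s t hst
      · intro s
        simp only [hu'def]
        by_cases hs : s ∈ T <;> simp only [hs, if_true, if_false]
        · have := hεle1 s hs; linarith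
        · exact hPle s
    obtain ⟨s₀, hs₀⟩ := hT
    have h3 := hleP u' hu'Q s₀
    simp only [hu'def, hs₀, if_true] at h3
    linarith
  -- growth of A
  have hgrow : ∀ k, A k ≠ Finset.univ → (A k).card + 1 ≤ (A (k + 1)).card := by
    intro k hA
    have hex : ∃ s, s ∉ A k ∧ ∃ t ∈ A k, P s = P t + b s t := by
      by_contra hcon
      push_neg at hcon
      refine bump (Finset.univ \ A k) ?_ ?_ ?_
      · rw [Finset.sdiff_nonempty]
        intro hsub
        exact hA (le_antisymm (Finset.subset_univ _) hsub)
      · intro s hs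
        rw [Finset.mem_sdiff] at hs
        rcases lt_or_eq_of_le (hPle s) with h | h
        · exact h
        · exact absurd (hK k s h) hs.2
      · intro s hs t ht
        rw [Finset.mem_sdiff] at hs
        have htA : t ∈ A k := by
          by_contra h
          exact ht (Finset.mem_sdiff.mpr ⟨Finset.mem_univ t, h⟩)
        have hst : s ≠ t := by
          rintro rfl
          exact hs.2 htA
        have := hPC s t hst
        have hne' := hcon s hs.2 t htA
        rcases lt_or_eq_of_le this with h | h
        · linarith
        · exact absurd (by linarith) hne'
    obtain ⟨s, hsA, t, htA, htight⟩ := hex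
    have htmem : (relaxOp b)^[k] v t = P t := by
      simpa [hAdef] using htA
    have hsA1 : s ∈ A (k + 1) := by
      have hst : t ≠ s := by
        rintro rfl
        exact hsA htA
      have h1 : (relaxOp b)^[k + 1] v s ≤ (relaxOp b)^[k] v t + b s t := by
        rw [Function.iterate_succ_apply']
        exact relax_le_pair b _ hst
      rw [htmem] at h1
      have h2 := hPiter (k + 1) s
      simp only [hAdef, Finset.mem_filter, Finset.mem_univ, true_and]
      linarith
    calc (A k).card + 1 = (insert s (A k)).card :=
          (Finset.card_insert_of_notMem hsA).symm
      _ ≤ (A (k + 1)).card :=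
          Finset.card_le_card (Finset.insert_subset hsA1 (hAmono k))
  have hcount : ∀ k, A k = Finset.univ ∨ k ≤ (A k).card := by
    intro k
    induction k with
    | zero => exact Or.inr (Nat.zero_le _)
    | succ k ih =>
      by_cases hA : A k = Finset.univ
      · exact Or.inl (le_antisymm (Finset.subset_univ _) (hA ▸ hAmono k))
      · rcases ih with h | h
        · exact absurd h hA
        · exact Or.inr (le_trans (Nat.add_le_add_right h 1) (hgrow k hA))
  have hAuniv : A (Fintype.card S) = Finset.univ := by
    rcases hcount (Fintype.card S) with h | h
    · exact h
    · exact Finset.eq_univ_of_card _ (le_antisymm (Finset.card_le_univ _) h)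
  have hfinal : (relaxOp b)^[Fintype.card S] v = P := by
    funext s
    have : s ∈ A (Fintype.card S) := hAuniv ▸ Finset.mem_univ s
    simpa [hAdef] using this
  refine ⟨?_, ?_, ?_⟩
  · rw [hfinal]; exact hPC
  · rw [hfinal]; exact hPle
  · intro u hu huv
    rw [hfinal]
    exact hleP u ⟨hu, huv⟩
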